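/- The metric F(S) = tr((W(S) + εI)^{-1}) is strictly decreasing in S: for any S₁ ⊊ S₂ ⊆ V, F(S₁) > F(S₂), where W(S) = Σ_{ω∈S} W_ω with each W_ω a nonzero positive semidefinite matrix. -/

import Mathlib

open Matrix

section Aux

variable {m : Type*} [Fintype m] [DecidableEq m]

lemma psd_trace_nonneg {M : Matrix m m ℝ} (hM : M.PosSemidef) : 0 ≤ M.trace := by
  have h : ∀ i : m, 0 ≤ M i i := fun i => by
    simpa using hM.2 (Finsupp.single i 1)
  exact Finset.sum_nonneg fun i _ => h i

lemma psd_trace_pos {M : Matrix m m ℝ} (hM : M.PosSemidef) (h0 : M ≠ 0) :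
    0 < M.trace := by
  have hH := hM.1
  have hspec := hH.spectral_theorem
  have htr : M.trace = ∑ i, hH.eigenvalues i := by
    conv_lhs => rw [hspec]
    rw [Unitary.conjStarAlgAut_apply, Matrix.trace_mul_cycle]
    rw [Matrix.mem_unitaryGroup_iff'.mp (hH.eigenvectorUnitary).2, Matrix.one_mul]
    simp [Matrix.trace_diagonal]
  have hnn : ∀ i : m, 0 ≤ hH.eigenvalues i := hM.eigenvalues_nonneg
  have hex : ∃ i ∈ Finset.univ (α := m), 0 < hH.eigenvalues i := by
    by_contra hc
    push_neg at hc
    have hz : ∀ i : m, hH.eigenvalues i = 0 := fun i =>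
      le_antisymm (hc i (Finset.mem_univ i)) (hnn i)
    apply h0
    rw [hspec]
    have : Matrix.diagonal (RCLike.ofReal ∘ hH.eigenvalues) = (0 : Matrix m m ℝ) := by
      ext i j
      by_cases hij : i = j <;> simp [Matrix.diagonal, hij, hz]
    rw [this, map_zero]
  rw [htr]
  exact Finset.sum_pos' (fun i _ => hnn i) hex

lemma psd_sum {ι : Type*} (s : Finset ι) (f : ι → Matrix m m ℝ)
    (h : ∀ i ∈ s, (f i).PosSemidef) : (∑ i ∈ s, f i).PosSemidef :=
  Finset.sum_induction f _ (fun _ _ ha hb => ha.add hb) Matrix.PosSemidef.zero h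

lemma smul_one_posDef {ε : ℝ} (hε : 0 < ε) :
    (ε • (1 : Matrix m m ℝ)).PosDef := by
  rw [Matrix.smul_one_eq_diagonal]
  exact Matrix.PosDef.diagonal fun _ => hε

end Aux

/-- The metric `F S = tr((W(S) + εI)⁻¹)` is strictly decreasing in `S`. -/
theorem metric_strictly_decreasing {V : Type*} [Fintype V] [DecidableEq V] {n : ℕ}
    (W : V → Matrix (Fin n) (Fin n) ℝ)
    (hW : ∀ ω : V, (W ω).PosSemidef) (hW0 : ∀ ω : V, W ω ≠ 0)
    (ε : ℝ) (hε : 0 < ε)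
    (F : Finset V → ℝ)
    (hF : ∀ S : Finset V, F S = ((∑ ω ∈ S, W ω) + ε • (1 : Matrix (Fin n) (Fin n) ℝ))⁻¹.trace)
    (S₁ S₂ : Finset V) (h : S₁ ⊂ S₂) :
    F S₂ < F S₁ := by
  set A : Matrix (Fin n) (Fin n) ℝ := (∑ ω ∈ S₁, W ω) + ε • 1 with hAdef
  set B : Matrix (Fin n) (Fin n) ℝ := (∑ ω ∈ S₂, W ω) + ε • 1 with hBdef
  set D : Matrix (Fin n) (Fin n) ℝ := ∑ ω ∈ S₂ \ S₁, W ω with hDdef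
  have hBeq : B = A + D := by
    rw [hBdef, hAdef, hDdef, ← Finset.sum_sdiff h.subset]
    abel
  have hA : A.PosDef :=
    Matrix.PosDef.posSemidef_add (psd_sum S₁ W fun i _ => hW i) (smul_one_posDef hε)
  have hB : B.PosDef :=
    Matrix.PosDef.posSemidef_add (psd_sum S₂ W fun i _ => hW i) (smul_one_posDef hε)
  have hD : D.PosSemidef := psd_sum _ W fun i _ => hW i
  -- D ≠ 0
  obtain ⟨ω₀, hω₀S₂, hω₀S₁⟩ := Finset.exists_of_ssubset h
  have hω₀ : ω₀ ∈ S₂ \ S₁ := Finset.mem_sdiff.mpr ⟨hω₀S₂, hω₀S₁⟩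
  have hDtr : 0 < D.trace := by
    rw [hDdef, Matrix.trace_sum]
    exact Finset.sum_pos'
      (fun i _ => psd_trace_nonneg (hW i))
      ⟨ω₀, hω₀, psd_trace_pos (hW ω₀) (hW0 ω₀)⟩
  have hD0 : D ≠ 0 := fun hc => by simp [hc] at hDtr
  -- invertibility facts
  have hAd : IsUnit A.det := hA.det_pos.ne'.isUnit
  have hBd : IsUnit B.det := hB.det_pos.ne'.isUnit
  have hAA : A⁻¹ * A = 1 := Matrix.nonsing_inv_mul A hAd
  have hAA' : A * A⁻¹ = 1 := Matrix.mul_nonsing_inv A hAd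
  have hBB : B⁻¹ * B = 1 := Matrix.nonsing_inv_mul B hBd
  have hBB' : B * B⁻¹ = 1 := Matrix.mul_nonsing_inv B hBd
  have hDBA : D = B - A := by rw [hBeq]; abel
  have e1 : B⁻¹ * D * A⁻¹ = A⁻¹ - B⁻¹ := by
    rw [hDBA, Matrix.mul_sub, Matrix.sub_mul, hBB, Matrix.one_mul,
      Matrix.mul_assoc, hAA', Matrix.mul_one]
  have e2 : B⁻¹ * D * A⁻¹ = B⁻¹ * D * B⁻¹ + B⁻¹ * D * A⁻¹ * D * B⁻¹ := by
    calc B⁻¹ * D * A⁻¹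
        = B⁻¹ * D * A⁻¹ * (B * B⁻¹) := by rw [hBB', Matrix.mul_one]
      _ = B⁻¹ * D * A⁻¹ * ((A + D) * B⁻¹) := by rw [← hBeq]
      _ = B⁻¹ * D * (A⁻¹ * A) * B⁻¹ + B⁻¹ * D * A⁻¹ * D * B⁻¹ := by noncomm_ring
      _ = B⁻¹ * D * B⁻¹ + B⁻¹ * D * A⁻¹ * D * B⁻¹ := by rw [hAA, Matrix.mul_one]
  have key : A⁻¹ - B⁻¹ = B⁻¹ * D * B⁻¹ + B⁻¹ * D * A⁻¹ * D * B⁻¹ := by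
    rw [← e1]; exact e2
  have hBinvH : B⁻¹ᴴ = B⁻¹ := hB.inv.1
  have hP1 : (B⁻¹ * D * B⁻¹).PosSemidef := by
    have := hD.conjTranspose_mul_mul_same B⁻¹
    rwa [hBinvH] at this
  have hP2 : (B⁻¹ * D * A⁻¹ * D * B⁻¹).PosSemidef := by
    have := hA.inv.posSemidef.conjTranspose_mul_mul_same (D * B⁻¹)
    rw [Matrix.conjTranspose_mul, hBinvH, hD.1.eq] at this
    simp only [Matrix.mul_assoc] at this ⊢
    exact this
  have hP1ne : B⁻¹ * D * B⁻¹ ≠ 0 := by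
    intro hc
    have hrec : B * (B⁻¹ * D * B⁻¹) * B = D := by
      calc B * (B⁻¹ * D * B⁻¹) * B = (B * B⁻¹) * D * (B⁻¹ * B) := by noncomm_ring
        _ = D := by rw [hBB', hBB, Matrix.one_mul, Matrix.mul_one]
    exact hD0 (by rw [← hrec, hc, Matrix.mul_zero, Matrix.zero_mul])
  rw [hF S₁, hF S₂]
  have hpos : 0 < A⁻¹.trace - B⁻¹.trace := by
    rw [← Matrix.trace_sub, key, Matrix.trace_add]
    exact add_pos_of_pos_of_nonneg (psd_trace_pos hP1 hP1ne) (psd_trace_nonneg hP2)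
  linarith
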